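/- Let m be even and let k₁, k₂ be integers with gcd(k₁,m) = d₁, gcd(k₂,m) = d₂, gcd(d₁,d₂) = d₃. If k₁ and k₂ are both odd, then 2d₁d₂/d₃² divides m. -/

import Mathlib

theorem stmt11 (m : ℕ) (hm : Even m) (k1 k2 : ℤ) (hk1 : Odd k1) (hk2 : Odd k2)
    (d1 d2 d3 : ℕ) (hd1 : d1 = Int.gcd k1 m) (hd2 : d2 = Int.gcd k2 m) (hd3 : d3 = Nat.gcd d1 d2) :
    2 * (d1 * d2 / (d3 * d3)) ∣ m := by
  -- d1 and d2 are odd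
  have hd1k : (d1 : ℤ) ∣ k1 := hd1 ▸ Int.gcd_dvd_left _ _
  have hd2k : (d2 : ℤ) ∣ k2 := hd2 ▸ Int.gcd_dvd_left _ _
  have hd1m : d1 ∣ m := by
    have := hd1 ▸ (Int.gcd_dvd_right (a := k1) (b := (m:ℤ)))
    exact_mod_cast this
  have hd2m : d2 ∣ m := by
    have := hd2 ▸ (Int.gcd_dvd_right (a := k2) (b := (m:ℤ)))
    exact_mod_cast this
  have hodd1 : ¬ (2 ∣ d1) := by
    intro h
    have : (2:ℤ) ∣ k1 := dvd_trans (by exact_mod_cast h) hd1k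
    exact (Int.not_even_iff_odd.mpr hk1) (even_iff_two_dvd.mpr this)
  have hodd2 : ¬ (2 ∣ d2) := by
    intro h
    have : (2:ℤ) ∣ k2 := dvd_trans (by exact_mod_cast h) hd2k
    exact (Int.not_even_iff_odd.mpr hk2) (even_iff_two_dvd.mpr this)
  have hd1pos : 0 < d1 := by
    rcases Nat.eq_zero_or_pos d1 with h | h
    · exfalso; exact hodd1 (h ▸ dvd_zero 2)
    · exact h
  have hd3pos : 0 < d3 := by
    rw [hd3]; exact Nat.gcd_pos_of_pos_left _ hd1pos
  have hd3d1 : d3 ∣ d1 := hd3 ▸ Nat.gcd_dvd_left _ _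
  have hd3d2 : d3 ∣ d2 := hd3 ▸ Nat.gcd_dvd_right _ _
  set a := d1 / d3 with ha
  set b := d2 / d3 with hb
  have hab : d1 * d2 / (d3 * d3) = a * b := by
    rw [ha, hb, Nat.div_mul_div_comm hd3d1 hd3d2]
  have hcop : Nat.Coprime a b := by
    rw [ha, hb, hd3]
    exact Nat.coprime_div_gcd_div_gcd (hd3 ▸ hd3pos)
  have ham : a ∣ m := dvd_trans (Nat.div_dvd_of_dvd hd3d1) hd1m
  have hbm : b ∣ m := dvd_trans (Nat.div_dvd_of_dvd hd3d2) hd2m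
  have habm : a * b ∣ m := Nat.Coprime.mul_dvd_of_dvd_of_dvd hcop ham hbm
  have hodda : ¬ (2 ∣ a) := fun h => hodd1 (h.trans (Nat.div_dvd_of_dvd hd3d1))
  have hoddb : ¬ (2 ∣ b) := fun h => hodd2 (h.trans (Nat.div_dvd_of_dvd hd3d2))
  have hcop2 : Nat.Coprime 2 (a * b) := by
    refine Nat.coprime_two_left.mpr ?_
    rcases Nat.even_or_odd (a*b) with h | h
    · exact absurd (even_iff_two_dvd.mp h) (fun hd => by
        rcases (Nat.prime_two.dvd_mul.mp hd) with h2 | h2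
        · exact hodda h2
        · exact hoddb h2)
    · exact h
  rw [hab]
  exact Nat.Coprime.mul_dvd_of_dvd_of_dvd hcop2 (even_iff_two_dvd.mp hm) habm
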